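/- For every n ≥ 0, L_n ∘ R_n = (t_n)^{n+1} and R_n ∘ L_n = (t'_n)^{n+1}. Consequently, L ∘ R is the identity if and only if the duplicial functor CC_𝕋(N,M) is cyclic (i.e. (t_n)^{n+1} = id in every degree), and R ∘ L is the identity if and only if CC_𝕊^op(N,M) is cyclic. -/

import Mathlib

/-!
STATEMENT 15: With `R_n := r_{n,n}∘⋯∘r_{0,n} : NT^{n+1}M → NS^{n+1}M` and
`L_n := l_{n,n}∘⋯∘l_{0,n} : NS^{n+1}M → NT^{n+1}M`, one has
`L_n ∘ R_n = (t_n)^{n+1}` and `R_n ∘ L_n = (t'_n)^{n+1}` for all `n ≥ 0`.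
Consequently `L∘R = id` iff `CC_𝕋(N,M)` is cyclic and `R∘L = id` iff
`CC_𝕊^op(N,M)` is cyclic.
-/

open CategoryTheory

namespace Stmt15

variable {B X Y : Type*} [Category B] [Category X] [Category Y]

/-- Iterated application of an endofunctor. -/
def iter (G : B ⥤ B) : ℕ → B → B
  | 0, Z => Z
  | n + 1, Z => G.obj (iter G n Z)

lemma iter_comm (G : B ⥤ B) (n : ℕ) (Z : B) :
    iter G n (G.obj Z) = G.obj (iter G n Z) := by
  induction n with
  | zero => rfl
  | succ n ih => simp [iter, ih]

/-- Composition power of an endomorphism. -/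
def cpow {C : Type*} [Category C] {Z : C} (e : Z ⟶ Z) : ℕ → (Z ⟶ Z)
  | 0 => 𝟙 Z
  | k + 1 => e ≫ cpow e k

section

variable (T S : Comonad B)
  (χ : (S.toFunctor ⋙ T.toFunctor : B ⥤ B) ⟶ (T.toFunctor ⋙ S.toFunctor : B ⥤ B))

/-- `χ̂^k : TS^k → S^kT` obtained by repeated application of `χ`, componentwise. -/
def chihat : (k : ℕ) → (Z : B) →
    (T.obj (iter S.toFunctor k Z) ⟶ iter S.toFunctor k (T.obj Z))
  | 0, Z => 𝟙 (T.obj Z)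
  | k + 1, Z => χ.app (iter S.toFunctor k Z) ≫ S.map (chihat k Z)

variable (M : X ⥤ B) (ρ : (M ⋙ T.toFunctor : X ⥤ B) ⟶ (M ⋙ S.toFunctor : X ⥤ B))

/-- The composite `(χ^n M) ∘ (T^n ρ) : T^{n+1}M ⟶ ST^nM`, componentwise. -/
def gmap (x : X) : (n : ℕ) →
    (iter T.toFunctor (n + 1) (M.obj x) ⟶ S.obj (iter T.toFunctor n (M.obj x)))
  | 0 => ρ.app x
  | n + 1 => T.map (gmap x n) ≫ χ.app (iter T.toFunctor n (M.obj x))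

/-- The composite `(S^n ρ) ∘ (χ̂^n M) : TS^nM ⟶ S^{n+1}M`, componentwise. -/
def hmap (x : X) : (n : ℕ) →
    (T.obj (iter S.toFunctor n (M.obj x)) ⟶ iter S.toFunctor (n + 1) (M.obj x))
  | 0 => ρ.app x
  | n + 1 => χ.app (iter S.toFunctor n (M.obj x)) ≫ S.map (hmap x n)

/-- `R_n := r_{n,n}∘⋯∘r_{0,n}` with `r_{i,n} := (S^iχ^{n-i}M)∘(S^iT^{n-i}ρ)`
(before applying `N`), defined via `R_n = S(R_{n-1}) ∘ r_{0,n}`. -/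
def Rmap (x : X) : (n : ℕ) →
    (iter T.toFunctor (n + 1) (M.obj x) ⟶ iter S.toFunctor (n + 1) (M.obj x))
  | 0 => ρ.app x
  | n + 1 => gmap T S χ M ρ x (n + 1) ≫ S.map (Rmap x n)

variable (N : B ⥤ Y) (lam : (S.toFunctor ⋙ N : B ⥤ Y) ⟶ (T.toFunctor ⋙ N : B ⥤ Y))

/-- `L_n := l_{n,n}∘⋯∘l_{0,n}` with `l_{i,n} := (Nχ̂^{n-i}T^iM)∘(λS^{n-i}T^iM)`,
defined recursively by peeling off `l_{0,n}`. -/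
def Lmap : (n : ℕ) → (W : B) →
    (N.obj (iter S.toFunctor (n + 1) W) ⟶ N.obj (iter T.toFunctor (n + 1) W))
  | 0, W => lam.app W ≫ N.map (chihat T S χ 0 W)
  | n + 1, W =>
      lam.app (iter S.toFunctor (n + 1) W) ≫ N.map (chihat T S χ (n + 1) W) ≫
        Lmap n (T.obj W) ≫ eqToHom (by simp [iter, iter_comm])

/-- The duplicial operator `t_n` on `CC_𝕋(N,M)_n`. -/
def tT (x : X) (n : ℕ) :
    N.obj (iter T.toFunctor (n + 1) (M.obj x)) ⟶
      N.obj (iter T.toFunctor (n + 1) (M.obj x)) :=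
  N.map (gmap T S χ M ρ x n) ≫ lam.app (iter T.toFunctor n (M.obj x))

/-- The duplicial operator `t'_n` on `CC_𝕊^op(N,M)_n`. -/
def tS (x : X) (n : ℕ) :
    N.obj (iter S.toFunctor (n + 1) (M.obj x)) ⟶
      N.obj (iter S.toFunctor (n + 1) (M.obj x)) :=
  lam.app (iter S.toFunctor n (M.obj x)) ≫ N.map (hmap T S χ M ρ x n)

end


attribute [reducible] iter

section Aux

variable (T S : Comonad B)
  (χ : (S.toFunctor ⋙ T.toFunctor : B ⥤ B) ⟶ (T.toFunctor ⋙ S.toFunctor : B ⥤ B))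

/-- Helper: a component of a natural transformation at equal objects. -/
lemma app_eqToHom {C D : Type*} [Category C] [Category D] {F G : C ⥤ D}
    (α : F ⟶ G) {Z Z' : C} (h : Z = Z') :
    α.app Z = eqToHom (by rw [h]) ≫ α.app Z' ≫ eqToHom (by rw [h]) := by
  subst h; simp

/-- Generic pointwise version of `gmap`. -/
def gA (m : B) (r : T.obj m ⟶ S.obj m) : (n : ℕ) →
    (iter T.toFunctor (n + 1) m ⟶ S.obj (iter T.toFunctor n m))
  | 0 => r
  | n + 1 => T.map (gA m r n) ≫ χ.app (iter T.toFunctor n m)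

/-- Generic pointwise version of `hmap`. -/
def hA (m : B) (r : T.obj m ⟶ S.obj m) : (n : ℕ) →
    (T.obj (iter S.toFunctor n m) ⟶ iter S.toFunctor (n + 1) m)
  | 0 => r
  | n + 1 => χ.app (iter S.toFunctor n m) ≫ S.map (hA m r n)

/-- Generic pointwise version of `Rmap`. -/
def RA (m : B) (r : T.obj m ⟶ S.obj m) : (n : ℕ) →
    (iter T.toFunctor (n + 1) m ⟶ iter S.toFunctor (n + 1) m)
  | 0 => r
  | n + 1 => gA T S χ m r (n + 1) ≫ S.map (RA m r n)

/-- The shifted coalgebra structure on `T.obj m`. -/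
def rsh (m : B) (r : T.obj m ⟶ S.obj m) : T.obj (T.obj m) ⟶ S.obj (T.obj m) :=
  T.map r ≫ χ.app m

lemma gA_shift (m : B) (r : T.obj m ⟶ S.obj m) (n : ℕ) :
    gA T S χ (T.obj m) (rsh T S χ m r) n
      = eqToHom (iter_comm T.toFunctor (n + 1) m) ≫ gA T S χ m r (n + 1)
          ≫ S.map (eqToHom (iter_comm T.toFunctor n m).symm) := by
  induction n with
  | zero => simp [gA, rsh, iter]
  | succ n ih =>
      rw [show gA T S χ (T.obj m) (rsh T S χ m r) (n+1)
            = T.map (gA T S χ (T.obj m) (rsh T S χ m r) n)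
              ≫ χ.app (iter T.toFunctor n (T.obj m)) from rfl,
        ih, app_eqToHom χ (iter_comm T.toFunctor n m)]
      simp [gA, iter, eqToHom_map]

lemma RA_chihat (m : B) (r : T.obj m ⟶ S.obj m) (n : ℕ) :
    T.map (RA T S χ m r n) ≫ chihat T S χ (n + 1) m
      = eqToHom (iter_comm T.toFunctor (n + 1) m).symm
          ≫ RA T S χ (T.obj m) (rsh T S χ m r) n := by
  induction n with
  | zero => simp [chihat, RA, rsh, iter]
  | succ n ih =>
      rw [show RA T S χ m r (n+1) = gA T S χ m r (n+1) ≫ S.map (RA T S χ m r n) from rfl,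
        show chihat T S χ (n+1+1) m
          = χ.app (iter S.toFunctor (n+1) m) ≫ S.map (chihat T S χ (n+1) m) from rfl,
        show RA T S χ (T.obj m) (rsh T S χ m r) (n+1)
          = gA T S χ (T.obj m) (rsh T S χ m r) (n+1)
            ≫ S.map (RA T S χ (T.obj m) (rsh T S χ m r) n) from rfl,
        gA_shift]
      have nat := χ.naturality (RA T S χ m r n)
      simp only [Functor.comp_map] at nat
      rw [Functor.map_comp, Category.assoc]
      slice_lhs 2 3 => rw [nat]
      rw [Category.assoc, ← Functor.map_comp, ih, Functor.map_comp]
      simp [gA, eqToHom_map]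

variable (N : B ⥤ Y) (lam : (S.toFunctor ⋙ N : B ⥤ Y) ⟶ (T.toFunctor ⋙ N : B ⥤ Y))

/-- Generic pointwise version of `tT`. -/
def tA (m : B) (r : T.obj m ⟶ S.obj m) (n : ℕ) :
    N.obj (iter T.toFunctor (n + 1) m) ⟶ N.obj (iter T.toFunctor (n + 1) m) :=
  N.map (gA T S χ m r n) ≫ lam.app (iter T.toFunctor n m)

/-- Generic pointwise version of `tS`. -/
def tA' (m : B) (r : T.obj m ⟶ S.obj m) (n : ℕ) :
    N.obj (iter S.toFunctor (n + 1) m) ⟶ N.obj (iter S.toFunctor (n + 1) m) :=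
  lam.app (iter S.toFunctor n m) ≫ N.map (hA T S χ m r n)

lemma tA_shift (m : B) (r : T.obj m ⟶ S.obj m) (n : ℕ) :
    tA T S χ N lam (T.obj m) (rsh T S χ m r) n
      = eqToHom (by simp [iter, iter_comm]) ≫ tA T S χ N lam m r (n + 1)
          ≫ eqToHom (by simp [iter, iter_comm]) := by
  rw [tA, tA, gA_shift, app_eqToHom lam (iter_comm T.toFunctor n m)]
  simp [eqToHom_map, iter]

lemma cpow_conj {C : Type*} [Category C] {A A' : C} (h : A = A') (e : A' ⟶ A') (k : ℕ) :
    cpow (eqToHom h ≫ e ≫ eqToHom h.symm) k = eqToHom h ≫ cpow e k ≫ eqToHom h.symm := by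
  induction k with
  | zero => simp [cpow]
  | succ k ih => simp [cpow, ih]

lemma cpow_intertwine {C : Type*} [Category C] {A A' : C} (e : A ⟶ A) (f : A' ⟶ A')
    (Φ : A ⟶ A') (hc : e ≫ Φ = Φ ≫ f) (k : ℕ) :
    cpow e k ≫ Φ = Φ ≫ cpow f k := by
  induction k with
  | zero => simp [cpow]
  | succ k ih =>
      rw [cpow, Category.assoc, ih, ← Category.assoc, hc, Category.assoc]
      rfl

lemma main1 (n : ℕ) : ∀ (m : B) (r : T.obj m ⟶ S.obj m),
    N.map (RA T S χ m r n) ≫ Lmap T S χ N lam n m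
      = cpow (tA T S χ N lam m r n) (n + 1) := by
  induction n with
  | zero => intro m r; simp [RA, Lmap, cpow, tA, gA, chihat, iter]
  | succ n ih =>
      intro m r
      rw [show RA T S χ m r (n+1) = gA T S χ m r (n+1) ≫ S.map (RA T S χ m r n) from rfl,
        show Lmap T S χ N lam (n+1) m
          = lam.app (iter S.toFunctor (n+1) m) ≫ N.map (chihat T S χ (n+1) m)
              ≫ Lmap T S χ N lam n (T.obj m) ≫ eqToHom (by simp [iter, iter_comm]) from rfl]
      have nat := lam.naturality (RA T S χ m r n)
      simp only [Functor.comp_map] at nat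
      rw [Functor.map_comp, Category.assoc]
      slice_lhs 2 3 => rw [nat]
      slice_lhs 3 4 => rw [← N.map_comp, RA_chihat, N.map_comp]
      slice_lhs 4 5 => rw [ih (T.obj m) (rsh T S χ m r)]
      rw [tA_shift, cpow_conj]
      simp [tA, cpow, eqToHom_map]

/-- Iterated `S` applied to `r`, as a map `S^n(Tm) ⟶ S^{n+1}m`. -/
def fA (m : B) (r : T.obj m ⟶ S.obj m) : (n : ℕ) →
    (iter S.toFunctor n (T.obj m) ⟶ iter S.toFunctor (n + 1) m)
  | 0 => r
  | n + 1 => S.map (fA m r n)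

lemma hA_fA (m : B) (r : T.obj m ⟶ S.obj m) (n : ℕ) :
    hA T S χ (T.obj m) (rsh T S χ m r) n ≫ S.map (fA T S m r n)
      = T.map (fA T S m r n) ≫ hA T S χ m r (n + 1) := by
  induction n with
  | zero => simp [hA, rsh, fA, iter]
  | succ n ih =>
      rw [show hA T S χ (T.obj m) (rsh T S χ m r) (n+1)
            = χ.app (iter S.toFunctor n (T.obj m))
              ≫ S.map (hA T S χ (T.obj m) (rsh T S χ m r) n) from rfl,
        show fA T S m r (n+1) = S.map (fA T S m r n) from rfl,
        Category.assoc, ← S.map_comp, ih, S.map_comp]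
      have nat := χ.naturality (fA T S m r n)
      simp only [Functor.comp_map] at nat
      rw [← Category.assoc, ← nat]
      simp [hA]

lemma chihat_fA (m : B) (r : T.obj m ⟶ S.obj m) (n : ℕ) :
    chihat T S χ n m ≫ fA T S m r n = hA T S χ m r n := by
  induction n with
  | zero => simp [chihat, fA, hA, iter]
  | succ n ih =>
      rw [show chihat T S χ (n+1) m
            = χ.app (iter S.toFunctor n m) ≫ S.map (chihat T S χ n m) from rfl,
        show fA T S m r (n+1) = S.map (fA T S m r n) from rfl,
        Category.assoc, ← S.map_comp, ih]
      rfl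

lemma RA_corec (m : B) (r : T.obj m ⟶ S.obj m) (n : ℕ) :
    RA T S χ m r (n + 1)
      = eqToHom (iter_comm T.toFunctor (n + 1) m).symm
          ≫ RA T S χ (T.obj m) (rsh T S χ m r) n ≫ fA T S m r (n + 1) := by
  induction n with
  | zero => simp [RA, gA, rsh, fA, iter]
  | succ n ih =>
      rw [show RA T S χ m r (n+1+1)
            = gA T S χ m r (n+2) ≫ S.map (RA T S χ m r (n+1)) from rfl, ih,
        show RA T S χ (T.obj m) (rsh T S χ m r) (n+1)
          = gA T S χ (T.obj m) (rsh T S χ m r) (n+1)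
            ≫ S.map (RA T S χ (T.obj m) (rsh T S χ m r) n) from rfl,
        gA_shift]
      simp [fA, eqToHom_map]

lemma tA'_intertwine (m : B) (r : T.obj m ⟶ S.obj m) (n : ℕ) :
    tA' T S χ N lam (T.obj m) (rsh T S χ m r) n ≫ N.map (fA T S m r (n + 1))
      = N.map (fA T S m r (n + 1)) ≫ tA' T S χ N lam m r (n + 1) := by
  rw [tA', tA',
    show fA T S m r (n+1) = S.map (fA T S m r n) from rfl]
  have nat := lam.naturality (fA T S m r n)
  simp only [Functor.comp_map] at nat
  slice_rhs 1 2 => rw [nat]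
  slice_lhs 2 3 => rw [← N.map_comp, hA_fA, N.map_comp]
  simp

lemma main2 (n : ℕ) : ∀ (m : B) (r : T.obj m ⟶ S.obj m),
    Lmap T S χ N lam n m ≫ N.map (RA T S χ m r n)
      = cpow (tA' T S χ N lam m r n) (n + 1) := by
  induction n with
  | zero => intro m r; simp [RA, Lmap, cpow, tA', hA, chihat, iter]
  | succ n ih =>
      intro m r
      rw [show Lmap T S χ N lam (n+1) m
          = lam.app (iter S.toFunctor (n+1) m) ≫ N.map (chihat T S χ (n+1) m)
              ≫ Lmap T S χ N lam n (T.obj m) ≫ eqToHom (by simp [iter, iter_comm]) from rfl,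
        RA_corec, N.map_comp, N.map_comp, eqToHom_map]
      slice_lhs 4 5 => rw [eqToHom_trans, eqToHom_refl]
      rw [Category.id_comp]
      slice_lhs 3 4 => rw [ih (T.obj m) (rsh T S χ m r)]
      rw [cpow_intertwine _ _ _ (tA'_intertwine T S χ N lam m r n) (n+1)]
      slice_lhs 2 3 => rw [← N.map_comp, chihat_fA]
      simp [tA', cpow]

variable (M : X ⥤ B) (ρ : (M ⋙ T.toFunctor : X ⥤ B) ⟶ (M ⋙ S.toFunctor : X ⥤ B))

lemma gmap_eq (x : X) (n : ℕ) :
    gmap T S χ M ρ x n = gA T S χ (M.obj x) (ρ.app x) n := by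
  induction n with
  | zero => rfl
  | succ n ih => rw [gmap, gA, ih]

lemma hmap_eq (x : X) (n : ℕ) :
    hmap T S χ M ρ x n = hA T S χ (M.obj x) (ρ.app x) n := by
  induction n with
  | zero => rfl
  | succ n ih => rw [hmap, hA, ih]

lemma Rmap_eq (x : X) (n : ℕ) :
    Rmap T S χ M ρ x n = RA T S χ (M.obj x) (ρ.app x) n := by
  induction n with
  | zero => rfl
  | succ n ih => rw [Rmap, RA, ih, gmap_eq]

lemma tT_eq (x : X) (n : ℕ) :
    tT T S χ M ρ N lam x n = tA T S χ N lam (M.obj x) (ρ.app x) n := by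
  rw [tT, tA, gmap_eq]

lemma tS_eq (x : X) (n : ℕ) :
    tS T S χ M ρ N lam x n = tA' T S χ N lam (M.obj x) (ρ.app x) n := by
  rw [tS, tA', hmap_eq]

end Aux

theorem LR_RL_cyclicity
    (T S : Comonad B)
    (χ : (S.toFunctor ⋙ T.toFunctor : B ⥤ B) ⟶ (T.toFunctor ⋙ S.toFunctor : B ⥤ B))
    -- `χ` is a comonad distributive law:
    (h1 : ∀ Z : B, χ.app Z ≫ S.map (T.ε.app Z) = T.ε.app (S.obj Z))
    (h2 : ∀ Z : B, χ.app Z ≫ S.ε.app (T.obj Z) = T.map (S.ε.app Z))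
    (h3 : ∀ Z : B, χ.app Z ≫ S.map (T.δ.app Z)
            = T.δ.app (S.obj Z) ≫ T.map (χ.app Z) ≫ χ.app (T.obj Z))
    (h4 : ∀ Z : B, χ.app Z ≫ S.δ.app (T.obj Z)
            = T.map (S.δ.app Z) ≫ χ.app (S.obj Z) ≫ S.map (χ.app Z))
    -- `(M, ρ)` is a right `χ`-coalgebra:
    (M : X ⥤ B) (ρ : (M ⋙ T.toFunctor : X ⥤ B) ⟶ (M ⋙ S.toFunctor : X ⥤ B))
    (hρ1 : ∀ x : X,
      ρ.app x ≫ S.δ.app (M.obj x)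
      = T.δ.app (M.obj x) ≫ T.map (ρ.app x) ≫ χ.app (M.obj x) ≫ S.map (ρ.app x))
    (hρ2 : ∀ x : X, ρ.app x ≫ S.ε.app (M.obj x) = T.ε.app (M.obj x))
    -- `(N, λ)` is a left `χ`-coalgebra:
    (N : B ⥤ Y) (lam : (S.toFunctor ⋙ N : B ⥤ Y) ⟶ (T.toFunctor ⋙ N : B ⥤ Y))
    (hlam1 : ∀ Z : B,
      lam.app Z ≫ N.map (T.δ.app Z)
      = N.map (S.δ.app Z) ≫ lam.app (S.obj Z) ≫ N.map (χ.app Z) ≫ lam.app (T.obj Z))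
    (hlam2 : ∀ Z : B, lam.app Z ≫ N.map (T.ε.app Z) = N.map (S.ε.app Z)) :
    -- `L_n ∘ R_n = (t_n)^{n+1}`:
    (∀ (n : ℕ) (x : X),
      N.map (Rmap T S χ M ρ x n) ≫ Lmap T S χ N lam n (M.obj x)
      = cpow (tT T S χ M ρ N lam x n) (n + 1)) ∧
    -- `R_n ∘ L_n = (t'_n)^{n+1}`:
    (∀ (n : ℕ) (x : X),
      Lmap T S χ N lam n (M.obj x) ≫ N.map (Rmap T S χ M ρ x n)
      = cpow (tS T S χ M ρ N lam x n) (n + 1)) ∧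
    -- `L ∘ R = id` iff `CC_𝕋(N,M)` is cyclic:
    ((∀ (n : ℕ) (x : X),
        N.map (Rmap T S χ M ρ x n) ≫ Lmap T S χ N lam n (M.obj x)
        = 𝟙 (N.obj (iter T.toFunctor (n + 1) (M.obj x))))
      ↔ (∀ (n : ℕ) (x : X),
        cpow (tT T S χ M ρ N lam x n) (n + 1)
        = 𝟙 (N.obj (iter T.toFunctor (n + 1) (M.obj x))))) ∧
    -- `R ∘ L = id` iff `CC_𝕊^op(N,M)` is cyclic:
    ((∀ (n : ℕ) (x : X),
        Lmap T S χ N lam n (M.obj x) ≫ N.map (Rmap T S χ M ρ x n)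
        = 𝟙 (N.obj (iter S.toFunctor (n + 1) (M.obj x))))
      ↔ (∀ (n : ℕ) (x : X),
        cpow (tS T S χ M ρ N lam x n) (n + 1)
        = 𝟙 (N.obj (iter S.toFunctor (n + 1) (M.obj x))))) := by
  have H1 : ∀ (n : ℕ) (x : X),
      N.map (Rmap T S χ M ρ x n) ≫ Lmap T S χ N lam n (M.obj x)
        = cpow (tT T S χ M ρ N lam x n) (n + 1) := by
    intro n x
    rw [Rmap_eq, tT_eq]
    exact main1 T S χ N lam n (M.obj x) (ρ.app x)
  have H2 : ∀ (n : ℕ) (x : X),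
      Lmap T S χ N lam n (M.obj x) ≫ N.map (Rmap T S χ M ρ x n)
        = cpow (tS T S χ M ρ N lam x n) (n + 1) := by
    intro n x
    rw [Rmap_eq, tS_eq]
    exact main2 T S χ N lam n (M.obj x) (ρ.app x)
  exact ⟨H1, H2,
    ⟨fun h n x => by rw [← H1, h], fun h n x => by rw [H1, h]⟩,
    ⟨fun h n x => by rw [← H2, h], fun h n x => by rw [H2, h]⟩⟩

end Stmt15
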